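/- Let n ≥ 3 and let D_{2n} = ⟨x, y | x² = yⁿ = 1, yx = xy⁻¹⟩ be the dihedral group of order 2n. The sequence over D_{2n} consisting of n−1 copies of y^t (where gcd(t,n) = 1) together with one element xy^s (0 ≤ s ≤ n−1) is product-one free and has length n. -/

import Mathlib

private def sgn {n : ℕ} : DihedralGroup n → ZMod 2
  | DihedralGroup.r _ => 0
  | DihedralGroup.sr _ => 1

private lemma sgn_mul {n : ℕ} (a b : DihedralGroup n) :
    sgn (a * b) = sgn a + sgn b := by
  cases a <;> cases b <;>
    simp [sgn, DihedralGroup.r_mul_r, DihedralGroup.r_mul_sr,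
      DihedralGroup.sr_mul_r, DihedralGroup.sr_mul_sr] <;> decide

private lemma sgn_prod {n : ℕ} (l : List (DihedralGroup n)) :
    sgn l.prod = (l.map sgn).sum := by
  induction l with
  | nil => simp [-DihedralGroup.r_zero, DihedralGroup.one_def, sgn]
  | cons a l ih => simp [sgn_mul, ih]

private lemma prod_all_r {n : ℕ} (a : ZMod n) (l : List (DihedralGroup n))
    (h : ∀ x ∈ l, x = DihedralGroup.r a) :
    l.prod = DihedralGroup.r ((l.length : ZMod n) * a) := by
  induction l with
  | nil => simp [-DihedralGroup.r_zero, DihedralGroup.one_def]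
  | cons x l ih =>
    rw [List.prod_cons, h x (by simp), ih (fun y hy => h y (by simp [hy])),
      DihedralGroup.r_mul_r]
    congr 1
    simp [List.length_cons]
    push_cast
    ring

private lemma sum_sgn {n : ℕ} (a b : ZMod n) (l : List (DihedralGroup n))
    (hab : DihedralGroup.r a ≠ DihedralGroup.sr b)
    (h : ∀ x ∈ l, x = DihedralGroup.r a ∨ x = DihedralGroup.sr b) :
    (l.map sgn).sum = (l.count (DihedralGroup.sr b) : ZMod 2) := by
  induction l with
  | nil => simp
  | cons x l ih =>
    have ih' := ih (fun y hy => h y (by simp [hy]))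
    rcases h x (by simp) with hx | hx <;> subst hx <;>
      simp [List.count_cons, ih', sgn, hab] <;> push_cast <;> ring

open DihedralGroup in
theorem stmt_13 (n : ℕ) (hn : 3 ≤ n) (t : ℕ) (ht : Nat.gcd t n = 1)
    (s : ℕ) (hs : s ≤ n - 1) :
    Multiset.card
        (Multiset.replicate (n - 1) (r (t : ZMod n)) + {sr (s : ZMod n)}) = n ∧
    ∀ l : List (DihedralGroup n), l ≠ [] →
      (l : Multiset (DihedralGroup n)) ≤
        Multiset.replicate (n - 1) (r (t : ZMod n)) + {sr (s : ZMod n)} →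
      l.prod ≠ 1 := by
  haveI : NeZero n := ⟨by omega⟩
  have hne : DihedralGroup.r (t : ZMod n) ≠ DihedralGroup.sr (s : ZMod n) := by
    simp
  constructor
  · simp [Multiset.card_replicate]
    omega
  · intro l hl hle hprod
    have hmem : ∀ x ∈ l, x = r (t : ZMod n) ∨ x = sr (s : ZMod n) := by
      intro x hx
      have hx' : x ∈ Multiset.replicate (n - 1) (r (t : ZMod n)) + {sr (s : ZMod n)} :=
        Multiset.mem_of_le hle (by exact_mod_cast hx)
      simp [Multiset.mem_replicate] at hx'
      tauto
    by_cases hsr : sr (s : ZMod n) ∈ l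
    · -- sign argument
      have hc1 : l.count (sr (s : ZMod n)) ≤ 1 := by
        have := Multiset.count_le_of_le (sr (s : ZMod n)) hle
        simpa [Multiset.count_replicate, hne.symm] using this
      have hc2 : 1 ≤ l.count (sr (s : ZMod n)) := List.one_le_count_iff.2 hsr
      have hc : l.count (sr (s : ZMod n)) = 1 := le_antisymm hc1 hc2
      have h1 : sgn l.prod = (l.map sgn).sum := sgn_prod l
      rw [hprod, sum_sgn _ _ _ hne hmem, hc] at h1
      simp [-DihedralGroup.r_zero, DihedralGroup.one_def, sgn] at h1
    · -- all elements are r t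
      have hall : ∀ x ∈ l, x = r (t : ZMod n) := by
        intro x hx
        rcases hmem x hx with h | h
        · exact h
        · exact absurd (h ▸ hx) hsr
      have hlen : l.length ≤ n - 1 := by
        have h2 := Multiset.count_le_of_le (r (t : ZMod n)) hle
        have h3 : l.count (r (t : ZMod n)) = l.length :=
          List.count_eq_length.2 (fun b hb => (hall b hb).symm)
        simp [Multiset.count_replicate, hne] at h2
        omega
      have hlen1 : 1 ≤ l.length := List.length_pos_iff.2 hl
      rw [prod_all_r _ _ hall, DihedralGroup.one_def] at hprod
      have h0 : (l.length : ZMod n) * (t : ZMod n) = 0 := by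
        simpa [-DihedralGroup.r_zero] using hprod
      have hu : IsUnit (t : ZMod n) := (ZMod.isUnit_iff_coprime t n).2 ht
      have h1 : (l.length : ZMod n) = 0 := by
        rcases hu with ⟨u, hu⟩
        rw [← hu] at h0
        exact (Units.mul_left_eq_zero u).1 h0
      have hdvd : n ∣ l.length := (ZMod.natCast_eq_zero_iff _ _).1 h1
      have := Nat.le_of_dvd (by omega) hdvd
      omega
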